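/- arXiv:1803.09959 — 2 statements merged into one kernel-verified Lean document; each statement's English description precedes it below -/
import Mathlib

section
/- Let A = Fa ⊕ Fb be the two-dimensional algebra with multiplication a² = a, ab = b, ba = 0, b² = a + b. Then A is simple, and for every commutative unital F-algebra R, the only R-algebra automorphism of A ⊗_F R is the identity; hence the automorphism group scheme of A is trivial and the only group-grading on A is the trivial one. -/
/-! Generic framework: nonassociative algebras are modules `B` over a field `F`
equipped with an explicit multiplication `mul : B → B → B`. -/

/-- `mul` is `F`-bilinear. -/
def IsBilinearMul (F : Type*) {B : Type*} [Field F] [AddCommGroup B] [Module F B]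
    (mul : B → B → B) : Prop :=
  (∀ x y z : B, mul (x + y) z = mul x z + mul y z) ∧
  (∀ x y z : B, mul x (y + z) = mul x y + mul x z) ∧
  (∀ (c : F) (x y : B), mul (c • x) y = c • mul x y) ∧
  (∀ (c : F) (x y : B), mul x (c • y) = c • mul x y)

/-- The product of the subspaces `U` and `V` is contained in `W`. -/
def SubMulLE {F B : Type*} [Field F] [AddCommGroup B] [Module F B]
    (mul : B → B → B) (U V W : Submodule F B) : Prop :=
  ∀ u ∈ U, ∀ v ∈ V, mul u v ∈ W

/-- The product of the subspaces `U` and `V` is nonzero. -/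
def SubMulNonzero {F B : Type*} [Field F] [AddCommGroup B] [Module F B]
    (mul : B → B → B) (U V : Submodule F B) : Prop :=
  ∃ u ∈ U, ∃ v ∈ V, mul u v ≠ 0

/-- A grading of the subalgebra `S` of `(B, mul)`: a set `Γ` of nonzero subspaces of `S`
whose (direct) sum is `S`, closed under multiplication. -/
structure IsGradingOn {F B : Type*} [Field F] [AddCommGroup B] [Module F B]
    (mul : B → B → B) (S : Submodule F B) (Γ : Set (Submodule F B)) : Prop where
  ne_bot : ∀ U ∈ Γ, U ≠ ⊥
  le : ∀ U ∈ Γ, U ≤ S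
  indep : sSupIndep Γ
  total : sSup Γ = S
  mul_closed : ∀ U ∈ Γ, ∀ V ∈ Γ, ∃ W ∈ Γ, SubMulLE mul U V W

/-- A grading on the whole algebra `(B, mul)`. -/
def IsGrading {F B : Type*} [Field F] [AddCommGroup B] [Module F B]
    (mul : B → B → B) (Γ : Set (Submodule F B)) : Prop :=
  IsGradingOn mul ⊤ Γ

/-- A degree map `δ : Γ → G` compatible with the grading relations:
`δ U + δ V = δ W` whenever `0 ≠ U·V ⊆ W`. -/
def IsCompatMap {F B : Type*} [Field F] [AddCommGroup B] [Module F B]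
    (mul : B → B → B) (Γ : Set (Submodule F B))
    (G : Type*) [AddCommGroup G] (δ : Submodule F B → G) : Prop :=
  ∀ U ∈ Γ, ∀ V ∈ Γ, ∀ W ∈ Γ,
    SubMulNonzero mul U V → SubMulLE mul U V W → δ U + δ V = δ W

/-- `(G, δ)` is the universal group of the grading `Γ`: `δ` is compatible and every compatible
degree map factors through `δ` via a unique group homomorphism. -/
structure IsUniversalGroup {F B : Type*} [Field F] [AddCommGroup B] [Module F B]
    (mul : B → B → B) (Γ : Set (Submodule F B))
    (G : Type) [AddCommGroup G] (δ : Submodule F B → G) : Prop where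
  compat : IsCompatMap mul Γ G δ
  universal : ∀ (H : Type) (instH : AddCommGroup H) (δ' : Submodule F B → H),
    IsCompatMap mul Γ H δ' → ∃! φ : G →+ H, ∀ U ∈ Γ, φ (δ U) = δ' U

/-- `Γ` is a group-grading: it can be realized by an injective compatible degree map into an
abelian group. -/
def IsGroupGrading {F B : Type*} [Field F] [AddCommGroup B] [Module F B]
    (mul : B → B → B) (Γ : Set (Submodule F B)) : Prop :=
  ∃ (G : Type) (instG : AddCommGroup G) (δ : Submodule F B → G),
    Set.InjOn δ Γ ∧ @IsCompatMap F B _ _ _ mul Γ G instG δ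

/-- `Γ''` refines `Γ`: every component of `Γ''` is contained in a component of `Γ`. -/
def GradRefines {F B : Type*} [Field F] [AddCommGroup B] [Module F B]
    (Γ'' Γ : Set (Submodule F B)) : Prop :=
  ∀ U ∈ Γ'', ∃ W ∈ Γ, U ≤ W

/-- `Γ` is a fine grading of `S`: it admits no proper refinement. -/
def IsFineGradingOn {F B : Type*} [Field F] [AddCommGroup B] [Module F B]
    (mul : B → B → B) (S : Submodule F B) (Γ : Set (Submodule F B)) : Prop :=
  IsGradingOn mul S Γ ∧
    ∀ Γ'' : Set (Submodule F B), IsGradingOn mul S Γ'' → GradRefines Γ'' Γ → Γ'' = Γ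

/-- `Γ` is a fine group-grading of `S`: it admits no proper refinement among group-gradings. -/
def IsFineGroupGradingOn {F B : Type*} [Field F] [AddCommGroup B] [Module F B]
    (mul : B → B → B) (S : Submodule F B) (Γ : Set (Submodule F B)) : Prop :=
  IsGradingOn mul S Γ ∧ IsGroupGrading mul Γ ∧
    ∀ Γ'' : Set (Submodule F B), IsGradingOn mul S Γ'' → IsGroupGrading mul Γ'' →
      GradRefines Γ'' Γ → Γ'' = Γ

/-- `I` is a (two-sided) ideal of the subalgebra `S` of `(B, mul)`. -/
def IsIdealIn {F B : Type*} [Field F] [AddCommGroup B] [Module F B]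
    (mul : B → B → B) (S I : Submodule F B) : Prop :=
  I ≤ S ∧ ∀ x ∈ I, ∀ a ∈ S, mul a x ∈ I ∧ mul x a ∈ I

/-- The subalgebra `J` of `(B, mul)` is a simple algebra: its product is nonzero and it has no
proper nonzero ideals. -/
def IsSimpleAlgOn {F B : Type*} [Field F] [AddCommGroup B] [Module F B]
    (mul : B → B → B) (J : Submodule F B) : Prop :=
  (∃ x ∈ J, ∃ y ∈ J, mul x y ≠ 0) ∧
    ∀ I : Submodule F B, IsIdealIn mul J I → I = ⊥ ∨ I = J

/-- The subalgebra `S` of `(B, mul)` is semisimple: a finite direct sum of simple ideals. -/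
def IsSemisimpleOn {F B : Type*} [Field F] [AddCommGroup B] [Module F B]
    (mul : B → B → B) (S : Submodule F B) : Prop :=
  ∃ (n : ℕ) (J : Fin n → Submodule F B), iSupIndep J ∧ (⨆ i, J i) = S ∧
    ∀ i, IsIdealIn mul S (J i) ∧ IsSimpleAlgOn mul (J i)

/-- `I` is a graded submodule with respect to the grading family `𝒜`. -/
def IsGradedSubmoduleFam {F B G : Type*} [Field F] [AddCommGroup B] [Module F B]
    (𝒜 : G → Submodule F B) (I : Submodule F B) : Prop :=
  I = ⨆ g, I ⊓ 𝒜 g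

/-- `I` is a graded submodule with respect to the set-grading `Γ`. -/
def IsGradedSubmoduleSet {F B : Type*} [Field F] [AddCommGroup B] [Module F B]
    (Γ : Set (Submodule F B)) (I : Submodule F B) : Prop :=
  I = ⨆ U ∈ Γ, I ⊓ U

/-- The algebra `(B, mul)` with the `G`-grading `𝒜` is graded-simple: `B·B ≠ 0` and there are
no proper nonzero graded ideals. -/
def IsGradedSimpleFam {F B G : Type*} [Field F] [AddCommGroup B] [Module F B]
    (mul : B → B → B) (𝒜 : G → Submodule F B) : Prop :=
  (∃ a b : B, mul a b ≠ 0) ∧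
    ∀ I : Submodule F B, IsIdealIn mul ⊤ I → IsGradedSubmoduleFam 𝒜 I → I = ⊥ ∨ I = ⊤

/-- The centroid of `(B, mul)`, as a set of `F`-linear endomorphisms. -/
def centroidSet {F B : Type*} [Field F] [AddCommGroup B] [Module F B]
    (mul : B → B → B) : Set (Module.End F B) :=
  {c | ∀ a b : B, c (mul a b) = mul (c a) b ∧ c (mul a b) = mul a (c b)}

/-- The centroid of `(B, mul)`, as a submodule of `End_F(B)` (needs bilinearity of `mul`). -/
def centroid {F B : Type*} [Field F] [AddCommGroup B] [Module F B]
    (mul : B → B → B) (hbil : IsBilinearMul F mul) : Submodule F (Module.End F B) where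
  carrier := centroidSet mul
  add_mem' := by
    rintro c d hc hd
    intro a b
    obtain ⟨hc1, hc2⟩ := hc a b
    obtain ⟨hd1, hd2⟩ := hd a b
    constructor
    · rw [LinearMap.add_apply, hc1, hd1, LinearMap.add_apply, hbil.1]
    · rw [LinearMap.add_apply, hc2, hd2, LinearMap.add_apply, hbil.2.1]
  zero_mem' := by
    intro a b
    have h0 : ∀ y : B, mul 0 y = 0 := fun y => by
      have := hbil.2.2.1 0 0 y; simpa using this
    have h0' : ∀ y : B, mul y 0 = 0 := fun y => by
      have := hbil.2.2.2 0 y 0; simpa using this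
    simp [h0, h0']
  smul_mem' := by
    rintro r c hc a b
    obtain ⟨hc1, hc2⟩ := hc a b
    constructor
    · rw [LinearMap.smul_apply, hc1, LinearMap.smul_apply, hbil.2.2.1]
    · rw [LinearMap.smul_apply, hc2, LinearMap.smul_apply, hbil.2.2.2]

/-- Endomorphisms shifting degrees by `g` with respect to the grading family `𝒜`. -/
def endDegree {F B G : Type*} [Field F] [AddCommGroup B] [Module F B] [AddCommGroup G]
    (𝒜 : G → Submodule F B) (g : G) : Submodule F (Module.End F B) where
  carrier := {c | ∀ g' : G, ∀ x ∈ 𝒜 g', c x ∈ 𝒜 (g + g')}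
  add_mem' := fun hc hd g' x hx => by
    simpa [LinearMap.add_apply] using add_mem (hc g' x hx) (hd g' x hx)
  zero_mem' := fun g' x hx => by simpa using zero_mem _
  smul_mem' := fun r c hc g' x hx => by
    simpa [LinearMap.smul_apply] using Submodule.smul_mem _ r (hc g' x hx)

/-- The homogeneous component of degree `g` of the centroid. -/
def centroidComponent {F B G : Type*} [Field F] [AddCommGroup B] [Module F B] [AddCommGroup G]
    (mul : B → B → B) (hbil : IsBilinearMul F mul)
    (𝒜 : G → Submodule F B) (g : G) : Submodule F (Module.End F B) :=
  centroid mul hbil ⊓ endDegree 𝒜 g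

/-! Loop algebras. We realize the loop algebra inside `G →₀ A` (the `A`-span of the group
algebra `F G`, with `x ⊗ g` corresponding to `Finsupp.single g x`), with the convolution
product. -/

/-- Convolution product on `G →₀ A` induced by `mul`; under `x ⊗ g ↦ single g x` this is the
multiplication of `A ⊗ F[G]`. -/
noncomputable def convMul {A : Type*} {G : Type*} [AddCommGroup A]
    [AddCommGroup G] (mul : A → A → A) (f g : G →₀ A) : G →₀ A :=
  f.sum fun a x => g.sum fun b y => Finsupp.single (a + b) (mul x y)

/-- The loop algebra `L_π(A) = ⊕_g A_{π(g)} ⊗ g` as a submodule of `G →₀ A`. -/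
def loopSubmodule {F A : Type*} {G Gb : Type*} [Field F] [AddCommGroup A] [Module F A]
    [AddCommGroup G] [AddCommGroup Gb] (π : G →+ Gb) (𝒜 : Gb → Submodule F A) :
    Submodule F (G →₀ A) where
  carrier := {f | ∀ g : G, f g ∈ 𝒜 (π g)}
  add_mem' := fun hf hg g => by simpa [Finsupp.add_apply] using add_mem (hf g) (hg g)
  zero_mem' := fun g => by simp
  smul_mem' := fun r f hf g => by
    simpa [Finsupp.smul_apply] using Submodule.smul_mem _ r (hf g)

/-- The multiplication of the loop algebra. -/
noncomputable def loopMul {F A : Type*} {G Gb : Type*} [Field F] [AddCommGroup A] [Module F A]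
    [AddCommGroup G] [AddCommGroup Gb] (mul : A → A → A) (π : G →+ Gb)
    (𝒜 : Gb → Submodule F A)
    (hgmul : ∀ g h : Gb, ∀ x ∈ 𝒜 g, ∀ y ∈ 𝒜 h, mul x y ∈ 𝒜 (g + h))
    (f g : ↥(loopSubmodule π 𝒜)) : ↥(loopSubmodule π 𝒜) :=
  ⟨convMul mul f.1 g.1, by
    intro k
    classical
    simp only [convMul, Finsupp.sum_apply]
    refine Submodule.finsuppSum_mem _ _ _ _ fun a _ => ?_
    refine Submodule.finsuppSum_mem _ _ _ _ fun b _ => ?_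
    simp only [Finsupp.single_apply]
    split_ifs with h
    · have hk : π k = π a + π b := by rw [← h, map_add]
      rw [hk]
      exact hgmul _ _ _ (f.2 a) _ (g.2 b)
    · exact zero_mem _⟩

/-- The homogeneous component of degree `g` of the loop algebra. -/
noncomputable def loopComponent {F A : Type*} {G Gb : Type*} [Field F] [AddCommGroup A] [Module F A]
    [AddCommGroup G] [AddCommGroup Gb] (π : G →+ Gb) (𝒜 : Gb → Submodule F A) (g : G) :
    Submodule F ↥(loopSubmodule π 𝒜) :=
  Submodule.comap (loopSubmodule π 𝒜).subtype ((𝒜 (π g)).map (Finsupp.lsingle g))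

/-- The set of homogeneous components of the `G`-grading of the loop algebra, as submodules of
the ambient `G →₀ A`. -/
def loopGradingSet {F A : Type*} {G Gb : Type*} [Field F] [AddCommGroup A] [Module F A]
    [AddCommGroup G] [AddCommGroup Gb] (π : G →+ Gb) (𝒜 : Gb → Submodule F A) :
    Set (Submodule F (G →₀ A)) :=
  {S | ∃ g : G, 𝒜 (π g) ≠ ⊥ ∧ S = (𝒜 (π g)).map (Finsupp.lsingle g)}

/-- The set of homogeneous components of the grading family `𝒜`. -/
def famGradingSet {F A Gb : Type*} [Field F] [AddCommGroup A] [Module F A]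
    (𝒜 : Gb → Submodule F A) : Set (Submodule F A) :=
  {S | ∃ gb : Gb, 𝒜 gb ≠ ⊥ ∧ S = 𝒜 gb}

/-- The algebra `A = Fa ⊕ Fb` with `a² = a`, `ab = b`, `ba = 0`, `b² = a + b`, realized on
`F × F` (resp. `R × R` after scalar extension) with `a = (1,0)`, `b = (0,1)`. -/
def exMul {R : Type*} [CommRing R] : R × R → R × R → R × R :=
  fun x y => (x.1 * y.1 + x.2 * y.2, x.1 * y.2 + x.2 * y.2)


section stmt17helpers
variable {F : Type*} [Field F]

lemma hind_of_disjoint {U V : Submodule F (F × F)} {u v : F × F}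
    (hd : Disjoint U V) (hu : u ∈ U) (hv : v ∈ V) (hu0 : u ≠ 0) (hv0 : v ≠ 0) :
    ∀ p q : F, p • u + q • v = 0 → p = 0 ∧ q = 0 := by
  intro p q h
  have h1 : p • u = -(q • v) := by
    rw [eq_neg_iff_add_eq_zero]; exact h
  have hm : p • u ∈ U ⊓ V := by
    refine ⟨Submodule.smul_mem _ _ hu, ?_⟩
    rw [h1]; exact neg_mem (Submodule.smul_mem _ _ hv)
  rw [hd.eq_bot] at hm
  have hp : p • u = 0 := hm
  have hq : q • v = 0 := by rwa [hp, zero_add] at h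
  exact ⟨by
    rcases smul_eq_zero.mp hp with h' | h'
    · exact h'
    · exact absurd h' hu0, by
    rcases smul_eq_zero.mp hq with h' | h'
    · exact h'
    · exact absurd h' hv0⟩

/-- Two independent vectors span `F × F`. -/
lemma two_dim_span {u v : F × F}
    (hind : ∀ p q : F, p • u + q • v = 0 → p = 0 ∧ q = 0) (w : F × F) :
    ∃ p q : F, w = p • u + q • v := by
  have hd0 : u.1 * v.2 - u.2 * v.1 ≠ 0 := by
    intro h0
    have h1 : v.2 • u + (-u.2) • v = 0 := by
      ext
      · simp only [Prod.fst_add, Prod.smul_fst, smul_eq_mul, Prod.fst_zero]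
        linear_combination h0
      · simp only [Prod.snd_add, Prod.smul_snd, smul_eq_mul, Prod.snd_zero]
        ring
    obtain ⟨hv2, hu2⟩ := hind _ _ h1
    have hu2' : u.2 = 0 := neg_eq_zero.mp hu2
    have h2 : v.1 • u + (-u.1) • v = 0 := by
      ext
      · simp only [Prod.fst_add, Prod.smul_fst, smul_eq_mul, Prod.fst_zero]; ring
      · simp only [Prod.snd_add, Prod.smul_snd, smul_eq_mul, Prod.snd_zero]
        rw [hu2', hv2]; ring
    obtain ⟨hv1, hu1⟩ := hind _ _ h2
    have h3 : (1:F) • u + (0:F) • v = 0 := by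
      ext <;> simp [hu2', neg_eq_zero.mp hu1]
    exact one_ne_zero (hind _ _ h3).1
  refine ⟨(w.1 * v.2 - w.2 * v.1) / (u.1 * v.2 - u.2 * v.1),
          (u.1 * w.2 - u.2 * w.1) / (u.1 * v.2 - u.2 * v.1), ?_⟩
  ext
  · simp only [Prod.fst_add, Prod.smul_fst, smul_eq_mul]
    rw [div_mul_eq_mul_div, div_mul_eq_mul_div, ← add_div, eq_div_iff hd0]
    ring
  · simp only [Prod.snd_add, Prod.smul_snd, smul_eq_mul]
    rw [div_mul_eq_mul_div, div_mul_eq_mul_div, ← add_div, eq_div_iff hd0]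
    ring

/-- A proper nonzero submodule of `F × F` is spanned by any of its nonzero elements. -/
lemma span_singleton_of_ne_top {U : Submodule F (F × F)} {u : F × F}
    (hU : U ≠ ⊤) (hu : u ∈ U) (hu0 : u ≠ 0) {x : F × F} (hx : x ∈ U) :
    ∃ c : F, x = c • u := by
  by_cases hd : u.1 * x.2 - u.2 * x.1 = 0
  · rcases eq_or_ne u.1 0 with h1 | h1
    · have h2 : u.2 ≠ 0 := by
        intro h2; exact hu0 (Prod.ext h1 h2)
      refine ⟨x.2 / u.2, ?_⟩
      ext
      · simp only [Prod.smul_fst, smul_eq_mul]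
        rw [h1] at hd ⊢
        rw [mul_zero]
        have : u.2 * x.1 = 0 := by linear_combination -hd
        rcases mul_eq_zero.mp this with h' | h'
        · exact absurd h' h2
        · exact h'
      · simp only [Prod.smul_snd, smul_eq_mul]
        field_simp
    · refine ⟨x.1 / u.1, ?_⟩
      ext
      · simp only [Prod.smul_fst, smul_eq_mul]; field_simp
      · simp only [Prod.smul_snd, smul_eq_mul]
        rw [div_mul_eq_mul_div, eq_div_iff h1]
        linear_combination hd
  · -- then u, x independent and U = ⊤, contradiction
    exfalso
    apply hU
    have hind : ∀ p q : F, p • u + q • x = 0 → p = 0 ∧ q = 0 := by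
      intro p q h
      have h1 : p * u.1 + q * x.1 = 0 := by
        have := congrArg Prod.fst h; simpa using this
      have h2 : p * u.2 + q * x.2 = 0 := by
        have := congrArg Prod.snd h; simpa using this
      have hq : q = 0 := by
        have : q * (u.1 * x.2 - u.2 * x.1) = 0 := by linear_combination u.1 * h2 - u.2 * h1
        rcases mul_eq_zero.mp this with h' | h'
        · exact h'
        · exact absurd h' hd
      refine ⟨?_, hq⟩
      rw [hq, zero_smul, add_zero] at h
      rcases smul_eq_zero.mp h with h' | h'
      · exact h'
      · exact absurd h' hu0
    rw [eq_top_iff]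
    intro w _
    obtain ⟨p, q, hw⟩ := two_dim_span hind w
    rw [hw]
    exact add_mem (Submodule.smul_mem _ _ hu) (Submodule.smul_mem _ _ hx)


lemma exMul_one_left (x : F × F) : exMul (1,0) x = x := by simp [exMul]

lemma exMul_add_left (x y z : F × F) : exMul (x + y) z = exMul x z + exMul y z := by
  simp only [exMul, Prod.mk_add_mk, Prod.fst_add, Prod.snd_add, Prod.mk.injEq]
  constructor <;> ring

lemma exMul_smul_left (c : F) (x y : F × F) : exMul (c • x) y = c • exMul x y := by
  simp only [exMul, Prod.smul_mk, Prod.smul_fst, Prod.smul_snd, smul_eq_mul, Prod.mk.injEq]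
  constructor <;> ring

lemma ex_ne_zero_left {u v : F × F}
    (hind : ∀ p q : F, p • u + q • v = 0 → p = 0 ∧ q = 0) : u ≠ 0 := by
  intro h
  exact one_ne_zero (hind 1 0 (by simp [h])).1

lemma ex_ne_zero_right {u v : F × F}
    (hind : ∀ p q : F, p • u + q • v = 0 → p = 0 ∧ q = 0) : v ≠ 0 := by
  intro h
  exact one_ne_zero (hind 0 1 (by simp [h])).2

lemma exMul_coords {x y z : F × F} (h : exMul x y = z) :
    x.1 * y.1 + x.2 * y.2 = z.1 ∧ x.1 * y.2 + x.2 * y.2 = z.2 :=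
  ⟨congrArg Prod.fst h, congrArg Prod.snd h⟩

lemma pair_ne_zero {x : F × F} (hx : x ≠ 0) (h2 : x.2 = 0) : x.1 ≠ 0 := by
  intro h1
  exact hx (by ext <;> simp [h1, h2])

lemma pair_ne_zero' {x : F × F} (hx : x ≠ 0) (h1 : x.1 = 0) : x.2 ≠ 0 := by
  intro h2
  exact hx (by ext <;> simp [h1, h2])

/-- Case: degree of `U` is zero (and of `V` is not). -/
lemma case_g0 {u v : F × F} {α β γ ε p q : F}
    (hind : ∀ p q : F, p • u + q • v = 0 → p = 0 ∧ q = 0)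
    (hα : exMul u u = α • u) (hβ : exMul u v = β • v)
    (hγ : exMul v u = γ • v) (hε : exMul v v = ε • u)
    (ha : p • u + q • v = ((1:F), (0:F))) : False := by
  have hu0 := ex_ne_zero_left hind
  have hv0 := ex_ne_zero_right hind
  have h0 : exMul (p • u + q • v) u = u := by rw [ha, exMul_one_left]
  rw [exMul_add_left, exMul_smul_left, exMul_smul_left, hα, hγ, smul_smul, smul_smul] at h0
  obtain ⟨hpα, hqγ⟩ := hind (p * α - 1) (q * γ) (by linear_combination (norm := module) h0)
  have h0' : exMul (p • u + q • v) v = v := by rw [ha, exMul_one_left]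
  rw [exMul_add_left, exMul_smul_left, exMul_smul_left, hβ, hε, smul_smul, smul_smul] at h0'
  obtain ⟨hqε, hpβ⟩ := hind (q * ε) (p * β - 1) (by linear_combination (norm := module) h0')
  have ha1 : p * u.1 + q * v.1 = 1 := congrArg Prod.fst ha
  have ha2 : p * u.2 + q * v.2 = 0 := congrArg Prod.snd ha
  obtain ⟨g1, g2⟩ := exMul_coords hγ
  simp only [Prod.smul_fst, Prod.smul_snd, smul_eq_mul] at g1 g2
  obtain ⟨e1, e2⟩ := exMul_coords hε
  simp only [Prod.smul_fst, Prod.smul_snd, smul_eq_mul] at e1 e2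
  rcases eq_or_ne q 0 with hq | hq
  · -- a = p • u, so u = (u1, 0) with u1 ≠ 0
    rw [hq, zero_mul, add_zero] at ha1 ha2
    have hp : p ≠ 0 := by
      intro h; rw [h, zero_mul] at ha1; exact one_ne_zero ha1.symm
    have hu2 : u.2 = 0 := by
      rcases mul_eq_zero.mp ha2 with h | h
      · exact absurd h hp
      · exact h
    have hu1 : u.1 ≠ 0 := by
      intro h; rw [h, mul_zero] at ha1; exact one_ne_zero ha1.symm
    rcases eq_or_ne v.1 0 with hv1 | hv1
    · have hv2 : v.2 ≠ 0 := pair_ne_zero' hv0 hv1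
      -- e2 : v.1*v.2 + v.2*v.2 = ε*u.2 = 0
      have : v.2 * v.2 = 0 := by
        rw [hu2, mul_zero] at e2; linear_combination e2 - v.2 * hv1
      rcases mul_eq_zero.mp this with h | h <;> exact hv2 h
    · -- γ = u.1 ≠ 0 and γ * v.2 = 0 so v.2 = 0, making u, v dependent
      have hγu : γ = u.1 := by
        have : (u.1 - γ) * v.1 = 0 := by linear_combination g1 - v.2 * hu2
        rcases mul_eq_zero.mp this with h | h
        · linear_combination -h
        · exact absurd h hv1
      have hv2 : v.2 = 0 := by
        have : γ * v.2 = 0 := by linear_combination -g2 + v.1 * hu2 + v.2 * hu2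
        rcases mul_eq_zero.mp this with h | h
        · rw [hγu] at h; exact absurd h hu1
        · exact h
      have hdep : v.1 • u + (-u.1) • v = 0 := by
        ext
        · simp only [Prod.fst_add, Prod.smul_fst, smul_eq_mul, Prod.fst_zero]; ring
        · simp only [Prod.snd_add, Prod.smul_snd, smul_eq_mul, Prod.snd_zero]
          rw [hu2, hv2]; ring
      exact hv1 (hind _ _ hdep).1
  · -- q ≠ 0, so γ = 0 and ε = 0
    have hγ0 : γ = 0 := by
      rcases mul_eq_zero.mp hqγ with h | h
      · exact absurd h hq
      · exact h
    have hε0 : ε = 0 := by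
      rcases mul_eq_zero.mp hqε with h | h
      · exact absurd h hq
      · exact h
    rw [hε0, zero_mul] at e1 e2
    rw [hγ0, zero_mul] at g1 g2
    have hv2 : v.2 ≠ 0 := by
      intro h
      have : v.1 * v.1 = 0 := by linear_combination e1 - v.2 * h
      rcases mul_eq_zero.mp this with h' | h' <;>
        exact hv0 (by ext <;> simp [h', h])
    have hv12 : v.1 = -v.2 := by
      have : v.2 * (v.1 + v.2) = 0 := by linear_combination e2
      rcases mul_eq_zero.mp this with h | h
      · exact absurd h hv2
      · linear_combination h
    have h2F : (2:F) = 0 := by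
      have : (2:F) * (v.2 * v.2) = 0 := by linear_combination e1 - (v.1 - v.2) * hv12
      rcases mul_eq_zero.mp this with h | h
      · exact h
      · rcases mul_eq_zero.mp h with h' | h' <;> exact absurd h' hv2
    have hu21 : u.2 = u.1 := by
      have : v.2 * (u.2 - u.1) = 0 := by linear_combination g1 - u.1 * hv12
      rcases mul_eq_zero.mp this with h | h
      · exact absurd h hv2
      · linear_combination h
    have hdep : v.2 • u + (-u.1) • v = 0 := by
      ext
      · simp only [Prod.fst_add, Prod.smul_fst, smul_eq_mul, Prod.fst_zero]
        linear_combination u.1 * v.2 * h2F - u.1 * hv12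
      · simp only [Prod.snd_add, Prod.smul_snd, smul_eq_mul, Prod.snd_zero]
        linear_combination v.2 * hu21
    exact hv2 (hind _ _ hdep).1


/-- Case: degree of `V` is zero (and of `U` is not). -/
lemma case_h0 {u v : F × F} {α β γ ε p q : F}
    (hind : ∀ p q : F, p • u + q • v = 0 → p = 0 ∧ q = 0)
    (hα : exMul u u = α • v) (hβ : exMul u v = β • u)
    (hγ : exMul v u = γ • u) (hε : exMul v v = ε • v)
    (ha : p • u + q • v = ((1:F), (0:F))) : False := by
  have hu0 := ex_ne_zero_left hind
  have hv0 := ex_ne_zero_right hind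
  have h0 : exMul (p • u + q • v) u = u := by rw [ha, exMul_one_left]
  rw [exMul_add_left, exMul_smul_left, exMul_smul_left, hα, hγ, smul_smul, smul_smul] at h0
  obtain ⟨hqγ, hpα⟩ := hind (q * γ - 1) (p * α) (by linear_combination (norm := module) h0)
  have h0' : exMul (p • u + q • v) v = v := by rw [ha, exMul_one_left]
  rw [exMul_add_left, exMul_smul_left, exMul_smul_left, hβ, hε, smul_smul, smul_smul] at h0'
  obtain ⟨hpβ, hqε⟩ := hind (p * β) (q * ε - 1) (by linear_combination (norm := module) h0')
  obtain ⟨a1, a2⟩ := exMul_coords hα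
  obtain ⟨b1, b2⟩ := exMul_coords hβ
  obtain ⟨g1, g2⟩ := exMul_coords hγ
  obtain ⟨e1, e2⟩ := exMul_coords hε
  simp only [Prod.smul_fst, Prod.smul_snd, smul_eq_mul] at a1 a2 b1 b2 g1 g2 e1 e2
  have hγ0 : γ ≠ 0 := by
    intro h; rw [h, mul_zero] at hqγ
    exact one_ne_zero (by linear_combination -hqγ)
  rcases eq_or_ne v.2 0 with hv2 | hv2
  · have hv1 : v.1 ≠ 0 := pair_ne_zero hv0 hv2
    rcases eq_or_ne u.2 0 with hu2 | hu2
    · have hdep : v.1 • u + (-u.1) • v = 0 := by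
        ext
        · simp only [Prod.fst_add, Prod.smul_fst, smul_eq_mul, Prod.fst_zero]; ring
        · simp only [Prod.snd_add, Prod.smul_snd, smul_eq_mul, Prod.snd_zero]
          rw [hu2, hv2]; ring
      exact hv1 (hind _ _ hdep).1
    · have hβ0 : β = 0 := by
        have : β * u.2 = 0 := by linear_combination -b2 + u.1 * hv2 + u.2 * hv2
        rcases mul_eq_zero.mp this with h | h
        · exact h
        · exact absurd h hu2
      have hu1 : u.1 = 0 := by
        have : u.1 * v.1 = 0 := by
          linear_combination b1 - u.2 * hv2 + u.1 * hβ0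
        rcases mul_eq_zero.mp this with h | h
        · exact h
        · exact absurd h hv1
      have : u.2 * u.2 = 0 := by linear_combination a2 - u.2 * hu1 + α * hv2
      rcases mul_eq_zero.mp this with h | h <;> exact hu2 h
  · have hε12 : v.1 + v.2 = ε := by
      have : v.2 * (v.1 + v.2 - ε) = 0 := by linear_combination e2
      rcases mul_eq_zero.mp this with h | h
      · exact absurd h hv2
      · linear_combination h
    have hv12 : v.2 = v.1 := by
      have : v.2 * (v.2 - v.1) = 0 := by linear_combination e1 - v.1 * hε12
      rcases mul_eq_zero.mp this with h | h
      · exact absurd h hv2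
      · linear_combination h
    have hu112 : u.1 * (u.1 - u.2) = 0 := by linear_combination a1 - a2 - α * hv12
    rcases mul_eq_zero.mp hu112 with hu1 | hu12
    · -- u.1 = 0
      have hu2 : u.2 = 0 := by
        have : v.2 * u.2 = 0 := by linear_combination g1 - v.1 * hu1 + γ * hu1
        rcases mul_eq_zero.mp this with h | h
        · exact absurd h hv2
        · exact h
      exact hu0 (by ext <;> simp [hu1, hu2])
    · -- u.1 = u.2, dependence
      have hdep : v.2 • u + (-u.1) • v = 0 := by
        ext
        · simp only [Prod.fst_add, Prod.smul_fst, smul_eq_mul, Prod.fst_zero]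
          linear_combination u.1 * hv12
        · simp only [Prod.snd_add, Prod.smul_snd, smul_eq_mul, Prod.snd_zero]
          linear_combination -v.2 * hu12
      exact hv2 (hind _ _ hdep).1

/-- Case: both degrees nonzero, so `uv = vu = 0`. -/
lemma case_both {u v : F × F}
    (hind : ∀ p q : F, p • u + q • v = 0 → p = 0 ∧ q = 0)
    (h1 : exMul u v = 0) (h2 : exMul v u = 0) : False := by
  have hu0 := ex_ne_zero_left hind
  have hv0 := ex_ne_zero_right hind
  obtain ⟨a1, a2⟩ := exMul_coords h1  -- u1v1+u2v2 = 0, u1v2+u2v2 = 0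
  obtain ⟨b1, b2⟩ := exMul_coords h2  -- v1u1+v2u2 = 0, v1u2+v2u2 = 0
  simp only [Prod.fst_zero, Prod.snd_zero] at a1 a2 b1 b2
  rcases eq_or_ne v.2 0 with hv2 | hv2
  · have hv1 : v.1 ≠ 0 := fun h => hv0 (Prod.ext h hv2)
    have hu2 : u.2 = 0 := by
      have : v.1 * u.2 = 0 := by linear_combination b2 - u.2 * hv2
      rcases mul_eq_zero.mp this with h | h
      · exact absurd h hv1
      · exact h
    have hu1 : u.1 = 0 := by
      have : u.1 * v.1 = 0 := by linear_combination a1 - u.2 * hv2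
      rcases mul_eq_zero.mp this with h | h
      · exact h
      · exact absurd h hv1
    exact hu0 (Prod.ext hu1 hu2)
  · have hu12 : u.1 = -u.2 := by
      have : v.2 * (u.1 + u.2) = 0 := by linear_combination a2
      rcases mul_eq_zero.mp this with h | h
      · exact absurd h hv2
      · linear_combination h
    have hu2 : u.2 ≠ 0 := by
      intro h
      apply hu0
      have h1' : u.1 = 0 := by rw [hu12, h, neg_zero]
      ext <;> simp [h1', h]
    have hv12 : v.1 = -v.2 := by
      have : u.2 * (v.1 + v.2) = 0 := by linear_combination b2
      rcases mul_eq_zero.mp this with h | h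
      · exact absurd h hu2
      · linear_combination h
    -- dependence: v.2 • u + (-u.2) • v = 0
    have hdep : v.2 • u + (-u.2) • v = 0 := by
      ext
      · simp only [Prod.fst_add, Prod.smul_fst, smul_eq_mul, Prod.fst_zero]
        rw [hu12, hv12]; ring
      · simp only [Prod.snd_add, Prod.smul_snd, smul_eq_mul, Prod.snd_zero]
        ring
    exact hv2 (hind _ _ hdep).1


lemma part1 : ((∃ x y : F × F, exMul x y ≠ 0) ∧
      ∀ I : Submodule F (F × F), IsIdealIn exMul ⊤ I → I = ⊥ ∨ I = ⊤) := by
  constructor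
  · exact ⟨(1,0), (1,0), by simp [exMul]⟩
  · intro I hI
    by_cases hI0 : I = ⊥
    · exact Or.inl hI0
    right
    obtain ⟨x, hx, hx0⟩ := Submodule.exists_mem_ne_zero_of_ne_bot hI0
    have hA : ((x.1, 0) : F × F) ∈ I := by
      have := (hI.2 x hx (1,0) trivial).2
      simpa [exMul] using this
    have hB : ((x.2, x.1 + x.2) : F × F) ∈ I := by
      have := (hI.2 x hx (0,1) trivial).2
      simpa [exMul] using this
    have hC : ((x.2, 0) : F × F) ∈ I := by
      have := (hI.2 _ hB (1,0) trivial).2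
      simpa [exMul] using this
    have hD : ((0, x.2) : F × F) ∈ I := by
      have := I.sub_mem hx hA
      have h' : x - ((x.1, 0) : F × F) = (0, x.2) := by ext <;> simp
      rwa [h'] at this
    have hE : ((0, x.1) : F × F) ∈ I := by
      have := I.sub_mem (I.sub_mem hB hC) hD
      have h' : ((x.2, x.1 + x.2) : F × F) - (x.2, 0) - (0, x.2) = (0, x.1) := by
        ext <;> simp
      rwa [h'] at this
    -- get (1,0) and (0,1) in I
    have key : ((1,0) : F × F) ∈ I ∧ ((0,1) : F × F) ∈ I := by
      rcases eq_or_ne x.1 0 with h1 | h1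
      · have h2 : x.2 ≠ 0 := by
          intro h2; exact hx0 (by ext <;> simp [h1, h2])
        constructor
        · have := I.smul_mem x.2⁻¹ hC
          have h' : x.2⁻¹ • ((x.2, 0) : F × F) = (1, 0) := by
            ext <;> simp [inv_mul_cancel₀ h2]
          rwa [h'] at this
        · have := I.smul_mem x.2⁻¹ hD
          have h' : x.2⁻¹ • ((0, x.2) : F × F) = (0, 1) := by
            ext <;> simp [inv_mul_cancel₀ h2]
          rwa [h'] at this
      · constructor
        · have := I.smul_mem x.1⁻¹ hA
          have h' : x.1⁻¹ • ((x.1, 0) : F × F) = (1, 0) := by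
            ext <;> simp [inv_mul_cancel₀ h1]
          rwa [h'] at this
        · have := I.smul_mem x.1⁻¹ hE
          have h' : x.1⁻¹ • ((0, x.1) : F × F) = (0, 1) := by
            ext <;> simp [inv_mul_cancel₀ h1]
          rwa [h'] at this
    rw [eq_top_iff]
    intro w _
    have hw : w = w.1 • ((1,0) : F × F) + w.2 • (0,1) := by
      ext <;> simp
    rw [hw]
    exact I.add_mem (I.smul_mem _ key.1) (I.smul_mem _ key.2)

lemma part2 : (∀ (R : Type) (instR : CommRing R) (instA : Algebra F R)
      (φ : (R × R) ≃ₗ[R] (R × R)),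
      (∀ x y : R × R, φ (exMul x y) = exMul (φ x) (φ y)) →
      φ = LinearEquiv.refl R (R × R)) := by
  intro R instR instA φ hφ
  have hlu : ∀ x : R × R, exMul ((1:R), (0:R)) x = x := by
    intro x; simp [exMul]
  -- φ (1,0) is a left unit, hence equals (1,0)
  have hφa_lu : ∀ w : R × R, exMul (φ (1,0)) w = w := by
    intro w
    have := hφ (1,0) (φ.symm w)
    rw [hlu] at this
    rw [φ.apply_symm_apply] at this
    exact this.symm
  have hφa : φ (1,0) = (1,0) := by
    have h1 := hφa_lu (1,0)
    have h2 := hφa_lu (0,1)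
    have e1 : (φ (1,0)).1 = 1 := by
      have := congrArg Prod.fst h1
      simpa [exMul] using this
    have e2 : (φ (1,0)).2 = 0 := by
      have := congrArg Prod.fst h2
      simpa [exMul] using this
    ext <;> simp [e1, e2]
  have hφb : φ (0,1) = (0,1) := by
    have hr : (φ (0,1)).1 = 0 := by
      have h := hφ (0,1) (1,0)
      rw [hφa] at h
      have h0 : exMul ((0:R),(1:R)) ((1:R),(0:R)) = 0 := by simp [exMul]
      rw [h0, map_zero] at h
      have := congrArg Prod.fst h.symm
      simpa [exMul] using this
    have hs : (φ (0,1)).2 = 1 := by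
      have h := hφ (0,1) (0,1)
      have h0 : exMul ((0:R),(1:R)) ((0:R),(1:R)) = ((1:R),(1:R)) := by simp [exMul]
      rw [h0] at h
      have h11 : ((1:R),(1:R)) = (1,0) + (0,1) := by ext <;> simp
      rw [h11, map_add, hφa] at h
      have c1 : 1 + (φ (0,1)).1 = (φ (0,1)).1 * (φ (0,1)).1 + (φ (0,1)).2 * (φ (0,1)).2 := by
        have := congrArg Prod.fst h
        simpa [exMul] using this
      have c2 : (φ (0,1)).2 = (φ (0,1)).1 * (φ (0,1)).2 + (φ (0,1)).2 * (φ (0,1)).2 := by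
        have := congrArg Prod.snd h
        simpa [exMul] using this
      rw [hr] at c1 c2
      linear_combination c2 - c1
    ext <;> simp [hr, hs]
  apply LinearEquiv.toLinearMap_injective
  apply LinearMap.ext
  intro w
  have hw : w = w.1 • ((1,0) : R × R) + w.2 • (0,1) := by ext <;> simp
  simp only [LinearEquiv.coe_coe, LinearEquiv.refl_apply]
  rw [hw, map_add, map_smul, map_smul, hφa, hφb]

lemma part3 : (∀ Γ : Set (Submodule F (F × F)), IsGrading exMul Γ → IsGroupGrading exMul Γ →
      Γ = {(⊤ : Submodule F (F × F))}) := by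
  intro Γ hG hGG
  obtain ⟨G, instG, δ, hδinj, hδcompat⟩ := hGG
  have htopbot : (⊤ : Submodule F (F × F)) ≠ ⊥ := by
    intro h
    have : ((1,0) : F × F) ∈ (⊥ : Submodule F (F × F)) := h ▸ Submodule.mem_top
    simp only [Submodule.mem_bot, Prod.mk_eq_zero] at this
    exact one_ne_zero this.1
  by_cases htop : (⊤ : Submodule F (F × F)) ∈ Γ
  · rw [Set.eq_singleton_iff_unique_mem]
    refine ⟨htop, fun S hS => ?_⟩
    by_contra hS'
    have hd := hG.indep hS
    have hle : (⊤ : Submodule F (F × F)) ≤ sSup (Γ \ {S}) :=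
      le_sSup (Set.mem_diff_singleton.mpr ⟨htop, fun h => hS' h.symm⟩)
    have : Disjoint S ⊤ := hd.mono_right (le_trans hle le_rfl)
    exact hG.ne_bot S hS (disjoint_top.mp this)
  · exfalso
    -- Γ is nonempty
    have hne : Γ.Nonempty := by
      by_contra h
      rw [Set.not_nonempty_iff_eq_empty] at h
      have ht := hG.total
      rw [h, sSup_empty] at ht
      exact htopbot ht.symm
    obtain ⟨U, hU⟩ := hne
    -- there is a second element
    have hV : ∃ V ∈ Γ, V ≠ U := by
      by_contra h
      push_neg at h
      have : Γ = {U} := Set.eq_singleton_iff_unique_mem.mpr ⟨hU, h⟩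
      have ht := hG.total
      rw [this, sSup_singleton] at ht
      exact htop (ht ▸ hU)
    obtain ⟨V, hV, hVU⟩ := hV
    have hUV : U ≠ V := fun h => hVU h.symm
    have hdisj : Disjoint U V := by
      have hd := hG.indep hU
      exact hd.mono_right (le_sSup (Set.mem_diff_singleton.mpr ⟨hV, hVU⟩))
    obtain ⟨u, hu, hu0⟩ := Submodule.exists_mem_ne_zero_of_ne_bot (hG.ne_bot U hU)
    obtain ⟨v, hv, hv0⟩ := Submodule.exists_mem_ne_zero_of_ne_bot (hG.ne_bot V hV)
    have hind := hind_of_disjoint hdisj hu hv hu0 hv0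
    have hUne : U ≠ ⊤ := fun h => htop (h ▸ hU)
    have hVne : V ≠ ⊤ := fun h => htop (h ▸ hV)
    -- Γ = {U, V}
    have hpair : ∀ W ∈ Γ, W = U ∨ W = V := by
      intro W hW
      by_contra h
      push_neg at h
      have hd := hG.indep hW
      have hle : (⊤ : Submodule F (F × F)) ≤ sSup (Γ \ {W}) := by
        intro w _
        obtain ⟨p, q, hw⟩ := two_dim_span hind w
        rw [hw]
        have hUle : U ≤ sSup (Γ \ {W}) := le_sSup (Set.mem_diff_singleton.mpr ⟨hU, fun h' => h.1 h'.symm⟩)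
        have hVle : V ≤ sSup (Γ \ {W}) := le_sSup (Set.mem_diff_singleton.mpr ⟨hV, fun h' => h.2 h'.symm⟩)
        exact add_mem (Submodule.smul_mem _ _ (hUle hu)) (Submodule.smul_mem _ _ (hVle hv))
      have : Disjoint W ⊤ := hd.mono_right hle
      exact hG.ne_bot W hW (disjoint_top.mp this)
    -- decomposition of the left unit (1,0)
    obtain ⟨p, q, ha⟩ := two_dim_span hind ((1,0) : F × F)
    -- multiplication targets
    obtain ⟨Wuu, hWuu, hmuu⟩ := hG.mul_closed U hU U hU
    obtain ⟨Wuv, hWuv, hmuv⟩ := hG.mul_closed U hU V hV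
    obtain ⟨Wvu, hWvu, hmvu⟩ := hG.mul_closed V hV U hU
    obtain ⟨Wvv, hWvv, hmvv⟩ := hG.mul_closed V hV V hV
    have hgh : δ U ≠ δ V := fun h => hUV (hδinj hU hV h)
    -- compat facts when products are nonzero
    have cuu : exMul u u ≠ 0 → δ U + δ U = δ Wuu :=
      fun h => hδcompat U hU U hU Wuu hWuu ⟨u, hu, u, hu, h⟩ hmuu
    have cuv : exMul u v ≠ 0 → δ U + δ V = δ Wuv :=
      fun h => hδcompat U hU V hV Wuv hWuv ⟨u, hu, v, hv, h⟩ hmuv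
    have cvu : exMul v u ≠ 0 → δ V + δ U = δ Wvu :=
      fun h => hδcompat V hV U hU Wvu hWvu ⟨v, hv, u, hu, h⟩ hmvu
    have cvv : exMul v v ≠ 0 → δ V + δ V = δ Wvv :=
      fun h => hδcompat V hV V hV Wvv hWvv ⟨v, hv, v, hv, h⟩ hmvv
    rcases eq_or_ne (δ U) 0 with hg0 | hg0
    · -- deg U = 0, deg V ≠ 0
      have hh0 : δ V ≠ 0 := fun h => hgh (hg0.trans h.symm)
      have huu : exMul u u ∈ U := by
        rcases hpair Wuu hWuu with h | h
        · exact h ▸ hmuu u hu u hu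
        · rcases eq_or_ne (exMul u u) 0 with h0 | h0
          · exact h0 ▸ zero_mem U
          · exfalso
            have hc := cuu h0
            rw [h, hg0, add_zero] at hc
            exact hh0 hc.symm
      have huv : exMul u v ∈ V := by
        rcases hpair Wuv hWuv with h | h
        · rcases eq_or_ne (exMul u v) 0 with h0 | h0
          · exact h0 ▸ zero_mem V
          · exfalso
            have hc := cuv h0
            rw [h, hg0, zero_add] at hc
            exact hh0 hc
        · exact h ▸ hmuv u hu v hv
      have hvu : exMul v u ∈ V := by
        rcases hpair Wvu hWvu with h | h
        · rcases eq_or_ne (exMul v u) 0 with h0 | h0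
          · exact h0 ▸ zero_mem V
          · exfalso
            have hc := cvu h0
            rw [h, hg0, add_zero] at hc
            exact hh0 hc
        · exact h ▸ hmvu v hv u hu
      have hvv : exMul v v ∈ U := by
        rcases hpair Wvv hWvv with h | h
        · exact h ▸ hmvv v hv v hv
        · rcases eq_or_ne (exMul v v) 0 with h0 | h0
          · exact h0 ▸ zero_mem U
          · exfalso
            have hc := cvv h0
            rw [h] at hc
            exact hh0 (add_eq_right.mp hc)
      obtain ⟨α, hα⟩ := span_singleton_of_ne_top hUne hu hu0 huu
      obtain ⟨β, hβ⟩ := span_singleton_of_ne_top hVne hv hv0 huv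
      obtain ⟨γ, hγ⟩ := span_singleton_of_ne_top hVne hv hv0 hvu
      obtain ⟨ε, hε⟩ := span_singleton_of_ne_top hUne hu hu0 hvv
      exact case_g0 hind hα hβ hγ hε ha.symm
    rcases eq_or_ne (δ V) 0 with hh0 | hh0
    · -- deg V = 0, deg U ≠ 0
      have huu : exMul u u ∈ V := by
        rcases hpair Wuu hWuu with h | h
        · rcases eq_or_ne (exMul u u) 0 with h0 | h0
          · exact h0 ▸ zero_mem V
          · exfalso
            have hc := cuu h0
            rw [h] at hc
            exact hg0 (add_eq_right.mp hc)
        · exact h ▸ hmuu u hu u hu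
      have huv : exMul u v ∈ U := by
        rcases hpair Wuv hWuv with h | h
        · exact h ▸ hmuv u hu v hv
        · rcases eq_or_ne (exMul u v) 0 with h0 | h0
          · exact h0 ▸ zero_mem U
          · exfalso
            have hc := cuv h0
            rw [h, hh0, add_zero] at hc
            exact hg0 hc
      have hvu : exMul v u ∈ U := by
        rcases hpair Wvu hWvu with h | h
        · exact h ▸ hmvu v hv u hu
        · rcases eq_or_ne (exMul v u) 0 with h0 | h0
          · exact h0 ▸ zero_mem U
          · exfalso
            have hc := cvu h0
            rw [h, hh0, zero_add] at hc
            exact hg0 hc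
      have hvv : exMul v v ∈ V := by
        rcases hpair Wvv hWvv with h | h
        · rcases eq_or_ne (exMul v v) 0 with h0 | h0
          · exact h0 ▸ zero_mem V
          · exfalso
            have hc := cvv h0
            rw [h, hh0, add_zero] at hc
            exact hg0 hc.symm
        · exact h ▸ hmvv v hv v hv
      obtain ⟨α, hα⟩ := span_singleton_of_ne_top hVne hv hv0 huu
      obtain ⟨β, hβ⟩ := span_singleton_of_ne_top hUne hu hu0 huv
      obtain ⟨γ, hγ⟩ := span_singleton_of_ne_top hUne hu hu0 hvu
      obtain ⟨ε, hε⟩ := span_singleton_of_ne_top hVne hv hv0 hvv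
      exact case_h0 hind hα hβ hγ hε ha.symm
    · -- both degrees nonzero
      have huv0 : exMul u v = 0 := by
        by_contra h0
        have hc := cuv h0
        rcases hpair Wuv hWuv with h | h
        · rw [h] at hc
          exact hh0 (add_eq_left.mp hc)
        · rw [h] at hc
          exact hg0 (add_eq_right.mp hc)
      have hvu0 : exMul v u = 0 := by
        by_contra h0
        have hc := cvu h0
        rcases hpair Wvu hWvu with h | h
        · rw [h] at hc
          exact hh0 (add_eq_right.mp hc)
        · rw [h] at hc
          exact hg0 (add_eq_left.mp hc)
      exact case_both hind huv0 hvu0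


end stmt17helpers

/-- the algebra `A` above is simple, every `R`-algebra automorphism of `A ⊗ R`
is the identity (so the automorphism group scheme is trivial), and the only group-grading on
`A` is the trivial one. -/
theorem stmt_17 {F : Type*} [Field F] :
    -- `A` is simple:
    ((∃ x y : F × F, exMul x y ≠ 0) ∧
      ∀ I : Submodule F (F × F), IsIdealIn exMul ⊤ I → I = ⊥ ∨ I = ⊤) ∧
    -- every `R`-algebra automorphism of `A ⊗_F R` is the identity:
    (∀ (R : Type) (instR : CommRing R) (instA : Algebra F R)
      (φ : (R × R) ≃ₗ[R] (R × R)),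
      (∀ x y : R × R, φ (exMul x y) = exMul (φ x) (φ y)) →
      φ = LinearEquiv.refl R (R × R)) ∧
    -- the only group-grading on `A` is the trivial one:
    (∀ Γ : Set (Submodule F (F × F)), IsGrading exMul Γ → IsGroupGrading exMul Γ →
      Γ = {(⊤ : Submodule F (F × F))}) :=
  ⟨part1, part2, part3⟩
end

section
/- Let F be algebraically closed of characteristic not 2, and let J = F1 ⊕ Fu ⊕ Fv be the unital commutative Jordan algebra with u² = v² = 1, uv = 0. Consider the two (Z/2)²-gradings on J: Γ¹ with deg u = (1,0), deg v = (1,1), and Γ² with deg u = (0,1), deg v = (1,1), both with identity component F1. Let U = Z/4 × Z/2 with π: U → (Z/2)² the natural projection. Then the loop algebras (L_π(J), Γ with respect to Γ¹) and (L_π(J), Γ with respect to Γ²) are not equivalent as graded algebras, even though (J, Γ¹) and (J, Γ²) are equivalent via the identity map. -/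
/-- The Jordan algebra `J = F1 ⊕ Fu ⊕ Fv` with `u² = v² = 1`, `uv = 0`, realized on
`F × F × F` with `1 = (1,0,0)`, `u = (0,1,0)`, `v = (0,0,1)`. -/
def mulJor {F : Type*} [Field F] : (F × F × F) → (F × F × F) → (F × F × F) :=
  fun x y => (x.1 * y.1 + x.2.1 * y.2.1 + x.2.2 * y.2.2,
              x.1 * y.2.1 + x.2.1 * y.1,
              x.1 * y.2.2 + x.2.2 * y.1)

/-- The `(ℤ/2)²`-grading `Γ¹` on `J`: `deg u = (1,0)`, `deg v = (1,1)`. -/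
noncomputable def grad1 (F : Type*) [Field F] :
    ZMod 2 × ZMod 2 → Submodule F (F × F × F) := fun g =>
  if g = (0, 0) then Submodule.span F {((1 : F), (0 : F), (0 : F))}
  else if g = (1, 0) then Submodule.span F {((0 : F), (1 : F), (0 : F))}
  else if g = (1, 1) then Submodule.span F {((0 : F), (0 : F), (1 : F))}
  else ⊥

/-- The `(ℤ/2)²`-grading `Γ²` on `J`: `deg u = (0,1)`, `deg v = (1,1)`. -/
noncomputable def grad2 (F : Type*) [Field F] :
    ZMod 2 × ZMod 2 → Submodule F (F × F × F) := fun g =>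
  if g = (0, 0) then Submodule.span F {((1 : F), (0 : F), (0 : F))}
  else if g = (0, 1) then Submodule.span F {((0 : F), (1 : F), (0 : F))}
  else if g = (1, 1) then Submodule.span F {((0 : F), (0 : F), (1 : F))}
  else ⊥

/-- The natural projection `π : ℤ/4 × ℤ/2 → ℤ/2 × ℤ/2`. -/
def projU : (ZMod 4 × ZMod 2) →+ (ZMod 2 × ZMod 2) :=
  AddMonoidHom.prodMap
    ((ZMod.castHom (show (2 : ℕ) ∣ 4 by norm_num) (ZMod 2)).toAddMonoidHom)
    (AddMonoidHom.id (ZMod 2))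

/-! ### Auxiliary lemmas -/

section Aux

lemma mulJor_zero_left {F : Type*} [Field F] (y : F × F × F) : mulJor 0 y = 0 := by
  simp [mulJor, Prod.ext_iff]

lemma mulJor_zero_right {F : Type*} [Field F] (x : F × F × F) : mulJor x 0 = 0 := by
  simp [mulJor, Prod.ext_iff]

lemma convMul_single {A G : Type*} [AddCommGroup A] [AddCommGroup G] (mul : A → A → A)
    (h0l : ∀ y, mul 0 y = 0) (h0r : ∀ x, mul x 0 = 0) (a b : G) (x y : A) :
    convMul mul (Finsupp.single a x) (Finsupp.single b y) = Finsupp.single (a + b) (mul x y) := by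
  classical
  unfold convMul
  rw [Finsupp.sum_single_index, Finsupp.sum_single_index]
  · simp [h0r]
  · rw [Finsupp.sum_single_index] <;> simp [h0l]

lemma single_mem_loop {F A : Type*} {G Gb : Type*} [Field F] [AddCommGroup A] [Module F A]
    [AddCommGroup G] [AddCommGroup Gb] (π : G →+ Gb) (𝒜 : Gb → Submodule F A)
    {g : G} {x : A} (hx : x ∈ 𝒜 (π g)) :
    Finsupp.single g x ∈ loopSubmodule π 𝒜 := by
  classical
  intro k
  rw [Finsupp.single_apply]
  split_ifs with h
  · subst h; exact hx
  · exact zero_mem _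

lemma mem_loopComponent_iff {F A : Type*} {G Gb : Type*} [Field F] [AddCommGroup A] [Module F A]
    [AddCommGroup G] [AddCommGroup Gb] (π : G →+ Gb) (𝒜 : Gb → Submodule F A) (g : G)
    (w : ↥(loopSubmodule π 𝒜)) :
    w ∈ loopComponent π 𝒜 g ↔ ∃ x ∈ 𝒜 (π g), Finsupp.single g x = (w : G →₀ A) := by
  unfold loopComponent
  rw [Submodule.mem_comap]
  simp [Submodule.mem_map, Finsupp.lsingle_apply]

lemma loopComponent_inj {F A : Type*} {G Gb : Type*} [Field F] [AddCommGroup A] [Module F A]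
    [AddCommGroup G] [AddCommGroup Gb] (π : G →+ Gb) (𝒜 : Gb → Submodule F A) {g h : G}
    (hg : 𝒜 (π g) ≠ ⊥)
    (heq : loopComponent π 𝒜 g = loopComponent π 𝒜 h) : g = h := by
  obtain ⟨x, hx, hx0⟩ := (Submodule.ne_bot_iff _).mp hg
  have hw : (⟨Finsupp.single g x, single_mem_loop π 𝒜 hx⟩ : ↥(loopSubmodule π 𝒜)) ∈
      loopComponent π 𝒜 g := (mem_loopComponent_iff π 𝒜 g _).mpr ⟨x, hx, rfl⟩
  rw [heq] at hw
  obtain ⟨y, hy, hxy⟩ := (mem_loopComponent_iff π 𝒜 h _).mp hw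
  rcases Finsupp.single_eq_single_iff _ _ _ _ |>.mp hxy with ⟨h1, _⟩ | ⟨_, h2⟩
  · exact h1.symm
  · exact absurd h2 hx0

lemma grad1_00 (F : Type*) [Field F] :
    grad1 F (0, 0) = Submodule.span F {((1 : F), (0 : F), (0 : F))} := by
  simp [grad1]

lemma grad1_10 (F : Type*) [Field F] :
    grad1 F (1, 0) = Submodule.span F {((0 : F), (1 : F), (0 : F))} := by
  simp [grad1]

lemma grad1_11 (F : Type*) [Field F] :
    grad1 F (1, 1) = Submodule.span F {((0 : F), (0 : F), (1 : F))} := by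
  simp [grad1]

lemma grad1_01 (F : Type*) [Field F] : grad1 F (0, 1) = ⊥ := by
  simp [grad1]

lemma grad2_00 (F : Type*) [Field F] :
    grad2 F (0, 0) = Submodule.span F {((1 : F), (0 : F), (0 : F))} := by
  simp [grad2]

lemma grad2_01 (F : Type*) [Field F] :
    grad2 F (0, 1) = Submodule.span F {((0 : F), (1 : F), (0 : F))} := by
  simp [grad2]

lemma grad2_11 (F : Type*) [Field F] :
    grad2 F (1, 1) = Submodule.span F {((0 : F), (0 : F), (1 : F))} := by
  simp [grad2]

lemma grad2_10 (F : Type*) [Field F] : grad2 F (1, 0) = ⊥ := by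
  simp [grad2]

lemma span1_ne_bot (F : Type*) [Field F] :
    Submodule.span F {((1 : F), (0 : F), (0 : F))} ≠ ⊥ := by
  rw [Ne, Submodule.span_singleton_eq_bot]
  simp [Prod.ext_iff]

lemma span2_ne_bot (F : Type*) [Field F] :
    Submodule.span F {((0 : F), (1 : F), (0 : F))} ≠ ⊥ := by
  rw [Ne, Submodule.span_singleton_eq_bot]
  simp [Prod.ext_iff]

lemma span3_ne_bot (F : Type*) [Field F] :
    Submodule.span F {((0 : F), (0 : F), (1 : F))} ≠ ⊥ := by
  rw [Ne, Submodule.span_singleton_eq_bot]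
  simp [Prod.ext_iff]

end Aux

/-- the two gradings `Γ¹, Γ²` on `J` are equivalent (indeed they have the same
set of homogeneous components, so the identity is an equivalence), but the associated loop
algebras `L_π(J)` with respect to `π : ℤ/4 × ℤ/2 → (ℤ/2)²` are not equivalent as graded
algebras. -/
theorem stmt_19 {F : Type*} [Field F] [IsAlgClosed F] (hchar : (2 : F) ≠ 0) :
    -- the identity map is an equivalence `(J, Γ¹) → (J, Γ²)`:
    famGradingSet (grad1 F) = famGradingSet (grad2 F) ∧
    -- but the loop algebras are not equivalent as graded algebras:
    ¬ ∃ φ : ↥(loopSubmodule projU (grad1 F)) ≃ₗ[F] ↥(loopSubmodule projU (grad2 F)),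
      (∀ f g h : ↥(loopSubmodule projU (grad1 F)),
        (h : (ZMod 4 × ZMod 2) →₀ (F × F × F)) =
          convMul mulJor (f : (ZMod 4 × ZMod 2) →₀ (F × F × F))
            (g : (ZMod 4 × ZMod 2) →₀ (F × F × F)) →
        (φ h : (ZMod 4 × ZMod 2) →₀ (F × F × F)) =
          convMul mulJor (φ f : (ZMod 4 × ZMod 2) →₀ (F × F × F))
            (φ g : (ZMod 4 × ZMod 2) →₀ (F × F × F))) ∧
      (∀ g : ZMod 4 × ZMod 2, grad1 F (projU g) ≠ ⊥ →
        ∃ g' : ZMod 4 × ZMod 2, grad2 F (projU g') ≠ ⊥ ∧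
          Submodule.map φ.toLinearMap (loopComponent projU (grad1 F) g) =
            loopComponent projU (grad2 F) g') := by
  classical
  have hcases : ∀ x : ZMod 2 × ZMod 2, x = (0,0) ∨ x = (1,0) ∨ x = (0,1) ∨ x = (1,1) := by decide
  constructor
  · ext S
    constructor
    · rintro ⟨gb, hne, rfl⟩
      rcases hcases gb with h|h|h|h <;> subst h
      · exact ⟨(0,0), by rw [grad2_00]; exact span1_ne_bot F, (grad1_00 F).trans (grad2_00 F).symm⟩
      · exact ⟨(0,1), by rw [grad2_01]; exact span2_ne_bot F, (grad1_10 F).trans (grad2_01 F).symm⟩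
      · exact absurd (grad1_01 F) hne
      · exact ⟨(1,1), by rw [grad2_11]; exact span3_ne_bot F, (grad1_11 F).trans (grad2_11 F).symm⟩
    · rintro ⟨gb, hne, rfl⟩
      rcases hcases gb with h|h|h|h <;> subst h
      · exact ⟨(0,0), by rw [grad1_00]; exact span1_ne_bot F, (grad2_00 F).trans (grad1_00 F).symm⟩
      · exact absurd (grad2_10 F) hne
      · exact ⟨(1,0), by rw [grad1_10]; exact span2_ne_bot F, (grad2_01 F).trans (grad1_10 F).symm⟩
      · exact ⟨(1,1), by rw [grad1_11]; exact span3_ne_bot F, (grad2_11 F).trans (grad1_11 F).symm⟩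
  · rintro ⟨φ, hmul, hcomp⟩
    choose σ hσbot hσmap using hcomp
    -- injectivity of the induced degree map
    have hinj : ∀ (g : ZMod 4 × ZMod 2) (hg : grad1 F (projU g) ≠ ⊥) (h : ZMod 4 × ZMod 2)
        (hh : grad1 F (projU h) ≠ ⊥), σ g hg = σ h hh → g = h := by
      intro g hg h hh he
      have h1 : Submodule.map φ.toLinearMap (loopComponent projU (grad1 F) g)
          = Submodule.map φ.toLinearMap (loopComponent projU (grad1 F) h) := by
        rw [hσmap g hg, hσmap h hh, he]
      exact loopComponent_inj projU (grad1 F) hg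
        (Submodule.map_injective_of_injective φ.injective h1)
    -- additivity of the induced degree map on nonzero products
    have key : ∀ (g h s : ZMod 4 × ZMod 2), g + h = s →
        ∀ (hg : grad1 F (projU g) ≠ ⊥) (hh : grad1 F (projU h) ≠ ⊥)
          (hs : grad1 F (projU s) ≠ ⊥) (x y : F × F × F),
          x ∈ grad1 F (projU g) → y ∈ grad1 F (projU h) →
          mulJor x y ∈ grad1 F (projU s) → mulJor x y ≠ 0 →
          σ s hs = σ g hg + σ h hh := by
      intro g h s hsum hg hh hs x y hx hy hxy hne0
      subst hsum
      let f : ↥(loopSubmodule projU (grad1 F)) :=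
        ⟨Finsupp.single g x, single_mem_loop projU (grad1 F) hx⟩
      let k : ↥(loopSubmodule projU (grad1 F)) :=
        ⟨Finsupp.single h y, single_mem_loop projU (grad1 F) hy⟩
      let p : ↥(loopSubmodule projU (grad1 F)) :=
        ⟨Finsupp.single (g + h) (mulJor x y), single_mem_loop projU (grad1 F) hxy⟩
      have hconv : (p : (ZMod 4 × ZMod 2) →₀ (F × F × F)) =
          convMul mulJor (f : (ZMod 4 × ZMod 2) →₀ (F × F × F))
            (k : (ZMod 4 × ZMod 2) →₀ (F × F × F)) :=
        (convMul_single mulJor mulJor_zero_left mulJor_zero_right g h x y).symm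
      have hφp := hmul f k p hconv
      have hfc : f ∈ loopComponent projU (grad1 F) g :=
        (mem_loopComponent_iff _ _ _ _).mpr ⟨x, hx, rfl⟩
      have hkc : k ∈ loopComponent projU (grad1 F) h :=
        (mem_loopComponent_iff _ _ _ _).mpr ⟨y, hy, rfl⟩
      have hpc : p ∈ loopComponent projU (grad1 F) (g + h) :=
        (mem_loopComponent_iff _ _ _ _).mpr ⟨mulJor x y, hxy, rfl⟩
      have hfc2 : φ f ∈ loopComponent projU (grad2 F) (σ g hg) := by
        rw [← hσmap g hg]; exact Submodule.mem_map_of_mem hfc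
      have hkc2 : φ k ∈ loopComponent projU (grad2 F) (σ h hh) := by
        rw [← hσmap h hh]; exact Submodule.mem_map_of_mem hkc
      have hpc2 : φ p ∈ loopComponent projU (grad2 F) (σ (g + h) hs) := by
        rw [← hσmap (g + h) hs]; exact Submodule.mem_map_of_mem hpc
      obtain ⟨x', hx', hfx'⟩ := (mem_loopComponent_iff _ _ _ _).mp hfc2
      obtain ⟨y', hy', hky'⟩ := (mem_loopComponent_iff _ _ _ _).mp hkc2
      obtain ⟨z, hz, hpz⟩ := (mem_loopComponent_iff _ _ _ _).mp hpc2
      have hz0 : z ≠ 0 := by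
        intro h0
        rw [h0, Finsupp.single_zero] at hpz
        have hφp0 : φ p = 0 := by
          apply Subtype.ext
          exact hpz.symm
        have hp0 : p = 0 := by
          apply φ.injective
          rw [hφp0, map_zero]
        have hcoe : (p : (ZMod 4 × ZMod 2) →₀ (F × F × F)) = 0 := by rw [hp0]; rfl
        exact hne0 (Finsupp.single_eq_zero.mp hcoe)
      have hfinal : Finsupp.single (σ (g + h) hs) z
          = Finsupp.single (σ g hg + σ h hh) (mulJor x' y') := by
        rw [hpz, hφp, ← hfx', ← hky',
          convMul_single mulJor mulJor_zero_left mulJor_zero_right]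
      rcases (Finsupp.single_eq_single_iff _ _ _ _).mp hfinal with ⟨h1, _⟩ | ⟨h1, _⟩
      · exact h1
      · exact absurd h1 hz0
    -- concrete degree computations
    have pU00 : projU ((0,0) : ZMod 4 × ZMod 2) = ((0 : ZMod 2), (0 : ZMod 2)) := by decide
    have pU20 : projU ((2,0) : ZMod 4 × ZMod 2) = ((0 : ZMod 2), (0 : ZMod 2)) := by decide
    have pU10 : projU ((1,0) : ZMod 4 × ZMod 2) = ((1 : ZMod 2), (0 : ZMod 2)) := by decide
    have pU30 : projU ((3,0) : ZMod 4 × ZMod 2) = ((1 : ZMod 2), (0 : ZMod 2)) := by decide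
    have pU11 : projU ((1,1) : ZMod 4 × ZMod 2) = ((1 : ZMod 2), (1 : ZMod 2)) := by decide
    have h00 : grad1 F (projU ((0,0) : ZMod 4 × ZMod 2)) ≠ ⊥ := by
      rw [pU00, grad1_00]; exact span1_ne_bot F
    have h20 : grad1 F (projU ((2,0) : ZMod 4 × ZMod 2)) ≠ ⊥ := by
      rw [pU20, grad1_00]; exact span1_ne_bot F
    have h10 : grad1 F (projU ((1,0) : ZMod 4 × ZMod 2)) ≠ ⊥ := by
      rw [pU10, grad1_10]; exact span2_ne_bot F
    have h30 : grad1 F (projU ((3,0) : ZMod 4 × ZMod 2)) ≠ ⊥ := by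
      rw [pU30, grad1_10]; exact span2_ne_bot F
    have h11 : grad1 F (projU ((1,1) : ZMod 4 × ZMod 2)) ≠ ⊥ := by
      rw [pU11, grad1_11]; exact span3_ne_bot F
    -- witnesses
    have he1 : ((1 : F), (0 : F), (0 : F)) ∈ grad1 F (0, 0) := by
      rw [grad1_00]; exact Submodule.mem_span_singleton_self _
    have hu : ((0 : F), (1 : F), (0 : F)) ∈ grad1 F (1, 0) := by
      rw [grad1_10]; exact Submodule.mem_span_singleton_self _
    have hv : ((0 : F), (0 : F), (1 : F)) ∈ grad1 F (1, 1) := by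
      rw [grad1_11]; exact Submodule.mem_span_singleton_self _
    have m11 : mulJor ((1 : F), (0 : F), (0 : F)) ((1 : F), (0 : F), (0 : F))
        = ((1 : F), (0 : F), (0 : F)) := by norm_num [mulJor]
    have muu : mulJor ((0 : F), (1 : F), (0 : F)) ((0 : F), (1 : F), (0 : F))
        = ((1 : F), (0 : F), (0 : F)) := by norm_num [mulJor]
    have mvv : mulJor ((0 : F), (0 : F), (1 : F)) ((0 : F), (0 : F), (1 : F))
        = ((1 : F), (0 : F), (0 : F)) := by norm_num [mulJor]
    have hne1 : (((1 : F), (0 : F), (0 : F)) : F × F × F) ≠ 0 := by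
      simp [Prod.ext_iff]
    -- σ(0,0) = 0
    have e0 : σ (0,0) h00 = σ (0,0) h00 + σ (0,0) h00 :=
      key (0,0) (0,0) (0,0) (by decide) h00 h00 h00 _ _
        (by rw [pU00]; exact he1) (by rw [pU00]; exact he1)
        (by rw [m11, pU00]; exact he1) (by rw [m11]; exact hne1)
    have hs0 : σ (0,0) h00 = 0 := left_eq_add.mp e0
    have e1 : σ (2,0) h20 = σ (1,0) h10 + σ (1,0) h10 :=
      key (1,0) (1,0) (2,0) (by decide) h10 h10 h20 _ _
        (by rw [pU10]; exact hu) (by rw [pU10]; exact hu)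
        (by rw [muu, pU20]; exact he1) (by rw [muu]; exact hne1)
    have e2 : σ (2,0) h20 = σ (3,0) h30 + σ (3,0) h30 :=
      key (3,0) (3,0) (2,0) (by decide) h30 h30 h20 _ _
        (by rw [pU30]; exact hu) (by rw [pU30]; exact hu)
        (by rw [muu, pU20]; exact he1) (by rw [muu]; exact hne1)
    have e3 : σ (2,0) h20 = σ (1,1) h11 + σ (1,1) h11 :=
      key (1,1) (1,1) (2,0) (by decide) h11 h11 h20 _ _
        (by rw [pU11]; exact hv) (by rw [pU11]; exact hv)
        (by rw [mvv, pU20]; exact he1) (by rw [mvv]; exact hne1)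
    have hs20 : σ (2,0) h20 ≠ 0 := by
      intro h
      exact (by decide : ((2,0) : ZMod 4 × ZMod 2) ≠ (0,0))
        (hinj _ h20 _ h00 (h.trans hs0.symm))
    -- classify the images
    have hclass : ∀ t : ZMod 4 × ZMod 2, projU t ≠ (1,0) → t + t ≠ 0 →
        t = (1,1) ∨ t = (3,1) := by decide
    have hproj : ∀ (a : ZMod 4 × ZMod 2) (ha : grad1 F (projU a) ≠ ⊥),
        projU (σ a ha) ≠ ((1 : ZMod 2), (0 : ZMod 2)) := by
      intro a ha hp
      apply hσbot a ha
      rw [hp]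
      exact grad2_10 F
    have mem1 : σ (1,0) h10 = (1,1) ∨ σ (1,0) h10 = (3,1) :=
      hclass _ (hproj _ h10) (by rw [← e1]; exact hs20)
    have mem2 : σ (3,0) h30 = (1,1) ∨ σ (3,0) h30 = (3,1) :=
      hclass _ (hproj _ h30) (by rw [← e2]; exact hs20)
    have mem3 : σ (1,1) h11 = (1,1) ∨ σ (1,1) h11 = (3,1) :=
      hclass _ (hproj _ h11) (by rw [← e3]; exact hs20)
    have d12 : σ (1,0) h10 ≠ σ (3,0) h30 := fun he =>
      (by decide : ((1,0) : ZMod 4 × ZMod 2) ≠ (3,0)) (hinj _ h10 _ h30 he)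
    have d13 : σ (1,0) h10 ≠ σ (1,1) h11 := fun he =>
      (by decide : ((1,0) : ZMod 4 × ZMod 2) ≠ (1,1)) (hinj _ h10 _ h11 he)
    have d23 : σ (3,0) h30 ≠ σ (1,1) h11 := fun he =>
      (by decide : ((3,0) : ZMod 4 × ZMod 2) ≠ (1,1)) (hinj _ h30 _ h11 he)
    rcases mem1 with m1|m1 <;> rcases mem2 with m2|m2 <;> rcases mem3 with m3|m3 <;>
      first
        | exact d12 (m1.trans m2.symm)
        | exact d13 (m1.trans m3.symm)
        | exact d23 (m2.trans m3.symm)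
end
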